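/- arXiv:2108.07047 — 6 statements merged into one kernel-verified Lean document; each statement's English description precedes it below -/
import Mathlib

section
/- Let v be a component additive network game and ρ a network formation probability distribution on N. Then the expected wealth 𝔼(v,ρ) = Σ_g ρ(g)·v(g) satisfies 𝔼(v,ρ) = Σ_{h ∈ C(g(ρ))} Σ_{h' ⊆ h} ρ_h(h')·v(h'), where the outer sum is over the components h of the extent g(ρ) and ρ_h is the restriction of ρ to h. -/
open scoped Classical BigOperators

noncomputable section

/-- A link is an unordered pair of two distinct players. -/
abbrev Link (N : Type) [DecidableEq N] := {e : Sym2 N // ¬ e.IsDiag}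

/-- A network is a set of links. -/
abbrev Network (N : Type) [Fintype N] [DecidableEq N] := Finset (Link N)

variable {N : Type} [Fintype N] [DecidableEq N]

/-- The link between two distinct players. -/
def mkLink (i j : N) (h : i ≠ j) : Link N :=
  ⟨s(i, j), by simp only [Sym2.mk_isDiag_iff]; exact h⟩

/-- ρ is a network formation probability distribution. -/
def IsDist (ρ : Network N → ℝ) : Prop :=
  (∀ g, 0 ≤ ρ g) ∧ ∑ g : Network N, ρ g = 1

/-- Restriction of a network formation probability distribution to a network `g`. -/
def restrictDist (ρ : Network N → ℝ) (g : Network N) : Network N → ℝ :=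
  fun h => if h ⊆ g then ∑ h' ∈ gᶜ.powerset, ρ (h ∪ h') else 0

/-- The links of player `i` in network `g`. -/
def playerLinks (i : N) (g : Network N) : Network N :=
  g.filter (fun e => i ∈ (e : Sym2 N))

/-- ρ^{-ij} : removal of the link `e` from the distribution ρ. -/
def linkRemove (ρ : Network N → ℝ) (e : Link N) : Network N → ℝ :=
  restrictDist ρ {e}ᶜ

/-- ρ^{-i} : removal of the player `i` from the distribution ρ. -/
def playerRemove (ρ : Network N → ℝ) (i : N) : Network N → ℝ :=
  restrictDist ρ (playerLinks i Finset.univ)ᶜ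

/-- The extent g(ρ) of ρ : the union of all networks with positive probability. -/
def extent (ρ : Network N → ℝ) : Network N :=
  Finset.univ.filter (fun e => ∃ g : Network N, 0 < ρ g ∧ e ∈ g)

/-- The set N(g) of non-isolated players of a network. -/
def players (g : Network N) : Finset N :=
  Finset.univ.filter (fun i => ∃ e ∈ g, i ∈ (e : Sym2 N))

/-- The simple graph associated with a network. -/
def toGraph (g : Network N) : SimpleGraph N where
  Adj i j := ∃ e ∈ g, (e : Sym2 N) = s(i, j)
  symm := by
    constructor
    rintro i j ⟨e, he, h2⟩
    exact ⟨e, he, by rw [h2, Sym2.eq_swap]⟩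
  loopless := by
    constructor
    rintro i ⟨e, he, h2⟩
    exact e.2 (by rw [h2]; exact Sym2.mk_isDiag_iff.mpr rfl)

/-- Two links lie in the same component of `g`. -/
def sameComp (g : Network N) (e e' : Link N) : Prop :=
  ∃ i ∈ (e : Sym2 N), ∃ j ∈ (e' : Sym2 N), (toGraph g).Reachable i j

/-- The component of `g` containing the link `e`. -/
def linkComponent (g : Network N) (e : Link N) : Network N :=
  g.filter (fun e' => sameComp g e e')

/-- The set C(g) of components of the network `g`. -/
def components (g : Network N) : Finset (Network N) :=
  g.image (linkComponent g)

/-- A network game `v` is component additive. -/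
def CompAdditive (v : Network N → ℝ) : Prop :=
  ∀ g : Network N, v g = ∑ h ∈ components g, v h

/-- Expected wealth 𝔼(v,ρ) of a variable network game. -/
def expWealth (v ρ : Network N → ℝ) : ℝ :=
  ∑ g : Network N, ρ g * v g

/-- The Shapley value of a cooperative game. -/
def shapley (ω : Finset N → ℝ) (i : N) : ℝ :=
  ∑ S ∈ (Finset.univ.erase i).powerset,
    ((S.card.factorial * (Fintype.card N - S.card - 1).factorial : ℝ) /
      (Fintype.card N).factorial) * (ω (insert i S) - ω S)

/-- The restriction g|S of a network to the coalition S. -/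
def netRestrict (g : Network N) (S : Finset N) : Network N :=
  g.filter (fun e => ∀ j ∈ (e : Sym2 N), j ∈ S)

/-- The Myerson Value of a network game. -/
def myerson (v : Network N → ℝ) (g : Network N) (i : N) : ℝ :=
  shapley (fun S => v (netRestrict g S)) i

/-- The Expected Myerson Value of a variable network game. -/
def expectedMyerson (v ρ : Network N → ℝ) (i : N) : ℝ :=
  ∑ g : Network N, ρ g * myerson v g i

/-- The cooperative game ω_{(v,ρ)} associated with a variable network game. -/
def coopGame (v ρ : Network N → ℝ) (S : Finset N) : ℝ :=
  ∑ g : Network N, ρ g * v (netRestrict g S)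

section Aux

variable {v ρ : Network N → ℝ} {g G : Network N} {e₀ e e' e'' f : Link N}

private lemma link_exists_mem (e : Link N) : ∃ i, i ∈ (e : Sym2 N) := by
  obtain ⟨z, hz⟩ := e
  induction z using Sym2.ind with
  | _ a b => exact ⟨a, Sym2.mem_mk_left a b⟩

private lemma reach_of_mem (he : e ∈ g) {i j : N} (hi : i ∈ (e : Sym2 N))
    (hj : j ∈ (e : Sym2 N)) : (toGraph g).Reachable i j := by
  by_cases hij : i = j
  · subst hij; exact SimpleGraph.Reachable.refl i
  · refine SimpleGraph.Adj.reachable ⟨e, he, ?_⟩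
    obtain ⟨z, hz⟩ := e
    simp only at hi hj ⊢
    induction z using Sym2.ind with
    | _ a b =>
      rw [Sym2.mem_iff] at hi hj
      rcases hi with rfl | rfl <;> rcases hj with rfl | rfl
      · exact absurd rfl hij
      · rfl
      · exact Sym2.eq_swap
      · exact absurd rfl hij

private lemma sameComp_refl (he : e ∈ g) : sameComp g e e := by
  obtain ⟨i, hi⟩ := link_exists_mem e
  exact ⟨i, hi, i, hi, SimpleGraph.Reachable.refl i⟩

private lemma sameComp_symm (h : sameComp g e e') : sameComp g e' e := by
  obtain ⟨i, hi, j, hj, hr⟩ := h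
  exact ⟨j, hj, i, hi, hr.symm⟩

private lemma sameComp_trans (he' : e' ∈ g) (h1 : sameComp g e e')
    (h2 : sameComp g e' e'') : sameComp g e e'' := by
  obtain ⟨i, hi, j, hj, hr1⟩ := h1
  obtain ⟨j', hj', k, hk, hr2⟩ := h2
  exact ⟨i, hi, k, hk, (hr1.trans (reach_of_mem he' hj hj')).trans hr2⟩

private lemma mem_linkComponent_iff :
    f ∈ linkComponent g e ↔ f ∈ g ∧ sameComp g e f := by
  simp [linkComponent]

private lemma linkComponent_congr (he : e ∈ g) (hf : f ∈ g) (hs : sameComp g e f) :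
    linkComponent g e = linkComponent g f := by
  ext x
  simp only [mem_linkComponent_iff]
  constructor
  · rintro ⟨hx, hsx⟩
    exact ⟨hx, sameComp_trans he (sameComp_symm hs) hsx⟩
  · rintro ⟨hx, hsx⟩
    exact ⟨hx, sameComp_trans hf hs hsx⟩

private lemma toGraph_mono (h : g ⊆ G) : toGraph g ≤ toGraph G := by
  rintro i j ⟨e, he, h2⟩
  exact ⟨e, h he, h2⟩

/-- The vertex `i` is incident to some link of `h`. -/
private def inComp (h : Network N) (i : N) : Prop := ∃ e ∈ h, i ∈ (e : Sym2 N)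

private lemma mem_comp_of (he₀ : e₀ ∈ G) (hf : f ∈ G) {j : N}
    (hjf : j ∈ (f : Sym2 N)) (hP : inComp (linkComponent G e₀) j) :
    f ∈ linkComponent G e₀ := by
  obtain ⟨e, he, hje⟩ := hP
  rw [mem_linkComponent_iff] at he ⊢
  obtain ⟨heG, a, ha, b, hb, hab⟩ := And.intro he.1 he.2
  exact ⟨hf, a, ha, j, hjf, hab.trans (reach_of_mem heG hb hje)⟩

private lemma adj_confine (hg : g ⊆ G) (he₀ : e₀ ∈ G) {i j : N}
    (hadj : (toGraph g).Adj i j) (hi : inComp (linkComponent G e₀) i) :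
    (toGraph (g ∩ linkComponent G e₀)).Adj i j ∧ inComp (linkComponent G e₀) j := by
  obtain ⟨f, hf, hfij⟩ := hadj
  have hiF : i ∈ (f : Sym2 N) := by rw [hfij]; exact Sym2.mem_mk_left i j
  have hjF : j ∈ (f : Sym2 N) := by rw [hfij]; exact Sym2.mem_mk_right i j
  have hfh := mem_comp_of he₀ (hg hf) hiF hi
  exact ⟨⟨f, Finset.mem_inter.mpr ⟨hf, hfh⟩, hfij⟩, ⟨f, hfh, hjF⟩⟩

private lemma walk_confine (hg : g ⊆ G) (he₀ : e₀ ∈ G) :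
    ∀ {i j : N}, (toGraph g).Walk i j → inComp (linkComponent G e₀) i →
      (toGraph (g ∩ linkComponent G e₀)).Reachable i j ∧ inComp (linkComponent G e₀) j := by
  intro i j w
  induction w with
  | nil => exact fun hi => ⟨SimpleGraph.Reachable.refl _, hi⟩
  | cons hadj w ih =>
    intro hi
    obtain ⟨hadj', hk⟩ := adj_confine hg he₀ hadj hi
    obtain ⟨hr, hj⟩ := ih hk
    exact ⟨hadj'.reachable.trans hr, hj⟩

private lemma linkComponent_inter (hg : g ⊆ G) (he₀ : e₀ ∈ G)
    (he : e ∈ g ∩ linkComponent G e₀) :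
    linkComponent (g ∩ linkComponent G e₀) e = linkComponent g e := by
  ext f
  simp only [mem_linkComponent_iff]
  constructor
  · rintro ⟨hf, i, hi, j, hj, hr⟩
    exact ⟨(Finset.mem_inter.mp hf).1, i, hi, j, hj,
      hr.mono (toGraph_mono Finset.inter_subset_left)⟩
  · rintro ⟨hf, i, hi, j, hj, hr⟩
    have hiP : inComp (linkComponent G e₀) i := ⟨e, (Finset.mem_inter.mp he).2, hi⟩
    obtain ⟨w⟩ := hr
    obtain ⟨hr', hjP⟩ := walk_confine hg he₀ w hiP
    exact ⟨Finset.mem_inter.mpr ⟨hf, mem_comp_of he₀ (hg hf) hj hjP⟩, i, hi, j, hj, hr'⟩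

private lemma components_disjoint {h₁ h₂ : Network N} (h1 : h₁ ∈ components G)
    (h2 : h₂ ∈ components G) (hne : h₁ ≠ h₂) : Disjoint h₁ h₂ := by
  obtain ⟨e₁, he₁, rfl⟩ := Finset.mem_image.mp h1
  obtain ⟨e₂, he₂, rfl⟩ := Finset.mem_image.mp h2
  rw [Finset.disjoint_left]
  intro e hA hB
  rw [mem_linkComponent_iff] at hA hB
  exact hne (linkComponent_congr he₁ he₂
    (sameComp_trans hA.1 hA.2 (sameComp_symm hB.2)))

private lemma comp_subset_nonempty {g' : Network N} {c : Network N}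
    (hc : c ∈ components g') : c ⊆ g' ∧ c.Nonempty := by
  obtain ⟨e, he, rfl⟩ := Finset.mem_image.mp hc
  exact ⟨Finset.filter_subset _ _,
    ⟨e, Finset.mem_filter.mpr ⟨he, sameComp_refl he⟩⟩⟩

private lemma components_eq_biUnion (hg : g ⊆ G) :
    components g = (components G).biUnion (fun h => components (g ∩ h)) := by
  ext c
  simp only [Finset.mem_biUnion]
  constructor
  · intro hc
    obtain ⟨e, he, rfl⟩ := Finset.mem_image.mp hc
    refine ⟨linkComponent G e, Finset.mem_image.mpr ⟨e, hg he, rfl⟩, ?_⟩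
    have he' : e ∈ g ∩ linkComponent G e :=
      Finset.mem_inter.mpr ⟨he, Finset.mem_filter.mpr ⟨hg he, sameComp_refl (hg he)⟩⟩
    exact Finset.mem_image.mpr ⟨e, he', linkComponent_inter hg (hg he) he'⟩
  · rintro ⟨h, hh, hc⟩
    obtain ⟨e₀, he₀, rfl⟩ := Finset.mem_image.mp hh
    obtain ⟨e, he, rfl⟩ := Finset.mem_image.mp hc
    exact Finset.mem_image.mpr
      ⟨e, (Finset.mem_inter.mp he).1, (linkComponent_inter hg he₀ he).symm⟩

private lemma sum_components (hv : CompAdditive v) (hg : g ⊆ G) :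
    v g = ∑ h ∈ components G, v (g ∩ h) := by
  rw [hv g, components_eq_biUnion hg, Finset.sum_biUnion ?_]
  · exact Finset.sum_congr rfl fun h _ => (hv (g ∩ h)).symm
  · intro h₁ h1 h₂ h2 hne
    rw [Function.onFun, Finset.disjoint_left]
    intro c hc1 hc2
    obtain ⟨hs1, e, hec⟩ := comp_subset_nonempty hc1
    obtain ⟨hs2, -⟩ := comp_subset_nonempty hc2
    have hd := components_disjoint h1 h2 hne
    exact (Finset.disjoint_left.mp hd
      (Finset.inter_subset_right (hs1 hec))
      (Finset.inter_subset_right (hs2 hec)))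

private lemma union_inter_eq {h h' h'' : Network N} (h1 : h' ⊆ h) (h2 : h'' ⊆ hᶜ) :
    (h' ∪ h'') ∩ h = h' := by
  ext x
  simp only [Finset.mem_inter, Finset.mem_union]
  constructor
  · rintro ⟨hx | hx, hxh⟩
    · exact hx
    · exact absurd hxh (Finset.mem_compl.mp (h2 hx))
  · exact fun hx => ⟨Or.inl hx, h1 hx⟩

private lemma sum_powerset_compl (h : Network N) (F : Network N → ℝ) :
    ∑ h' ∈ h.powerset, ∑ h'' ∈ hᶜ.powerset, F (h' ∪ h'') = ∑ g : Network N, F g := by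
  rw [← Finset.sum_product']
  refine Finset.sum_nbij' (fun p => p.1 ∪ p.2) (fun g => (g ∩ h, g \ h))
    (fun a _ => Finset.mem_univ _) ?_ ?_ ?_ (fun a _ => rfl)
  · intro a _
    rw [Finset.mem_product, Finset.mem_powerset, Finset.mem_powerset]
    refine ⟨Finset.inter_subset_right, fun x hx => ?_⟩
    rw [Finset.mem_compl]
    exact (Finset.mem_sdiff.mp hx).2
  · rintro ⟨h', h''⟩ hp
    rw [Finset.mem_product, Finset.mem_powerset, Finset.mem_powerset] at hp
    have e1 : (h' ∪ h'') ∩ h = h' := union_inter_eq hp.1 hp.2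
    have e2 : (h' ∪ h'') \ h = h'' := by
      ext x
      simp only [Finset.mem_sdiff, Finset.mem_union]
      constructor
      · rintro ⟨hx | hx, hxh⟩
        · exact absurd (hp.1 hx) hxh
        · exact hx
      · exact fun hx => ⟨Or.inr hx, Finset.mem_compl.mp (hp.2 hx)⟩
    simp [e1, e2]
  · intro g _
    ext x
    simp only [Finset.mem_union, Finset.mem_inter, Finset.mem_sdiff]
    by_cases hx : x ∈ h <;> tauto

private lemma subset_extent (hpos : 0 < ρ g) : g ⊆ extent ρ := fun e he =>
  Finset.mem_filter.mpr ⟨Finset.mem_univ _, g, hpos, he⟩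

end Aux

/-- for component additive v, the expected wealth decomposes over the
components of the extent of ρ. -/
theorem expWealth_component_decomposition (v ρ : Network N → ℝ)
    (hv : CompAdditive v) (hρ : IsDist ρ) :
    expWealth v ρ =
      ∑ h ∈ components (extent ρ), ∑ h' ∈ h.powerset, restrictDist ρ h h' * v h' := by
  symm
  calc
    ∑ h ∈ components (extent ρ), ∑ h' ∈ h.powerset, restrictDist ρ h h' * v h'
      = ∑ h ∈ components (extent ρ), ∑ g : Network N, ρ g * v (g ∩ h) := by
        refine Finset.sum_congr rfl fun h _ => ?_
        rw [← sum_powerset_compl h (fun g => ρ g * v (g ∩ h))]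
        refine Finset.sum_congr rfl fun h' hh' => ?_
        rw [Finset.mem_powerset] at hh'
        rw [restrictDist, if_pos hh', Finset.sum_mul]
        refine Finset.sum_congr rfl fun h'' hh'' => ?_
        rw [Finset.mem_powerset] at hh''
        rw [union_inter_eq hh' hh'']
    _ = ∑ g : Network N, ∑ h ∈ components (extent ρ), ρ g * v (g ∩ h) :=
        Finset.sum_comm
    _ = ∑ g : Network N, ρ g * v g := by
        refine Finset.sum_congr rfl fun g _ => ?_
        rw [← Finset.mul_sum]
        rcases eq_or_lt_of_le (hρ.1 g) with h0 | hpos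
        · rw [← h0, zero_mul, zero_mul]
        · rw [← sum_components hv (subset_extent hpos)]
    _ = expWealth v ρ := rfl
end
end

section
/- Let (v,ρ) be a variable network game and i ∈ N a player. Then 𝔼(v, ρ^{-i}) = 𝔼(v,ρ) − Σ_{g : i ∈ N(g)} ρ(g)·Δ_i(v,g), where Δ_i(v,g) = v(g) − v(g \ L_i) is the marginal contribution of player i at g and N(g) is the set of non-isolated players in g. -/
open scoped Classical BigOperators

noncomputable section

variable {N : Type} [Fintype N] [DecidableEq N]

/-- marginal contribution of a player to the expected wealth. -/
theorem expWealth_playerRemove (v ρ : Network N → ℝ) (hv : v ∅ = 0) (hρ : IsDist ρ)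
    (i : N) :
    expWealth v (playerRemove ρ i) =
      expWealth v ρ -
        ∑ g ∈ Finset.univ.filter (fun g : Network N => i ∈ players g),
          ρ g * (v g - v (g \ playerLinks i Finset.univ)) := by
  classical
  set Li := playerLinks i Finset.univ with hLi
  have key : expWealth v (playerRemove ρ i) = ∑ g : Network N, ρ g * v (g \ Li) := by
    have h1 : expWealth v (playerRemove ρ i)
        = ∑ h ∈ Liᶜ.powerset, ∑ h' ∈ Li.powerset, ρ (h ∪ h') * v h := by
      unfold expWealth playerRemove restrictDist
      rw [compl_compl]
      rw [show (Liᶜ.powerset : Finset (Network N)) = Finset.univ.filter (fun h => h ⊆ Liᶜ) by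
        ext h; simp [Finset.mem_powerset]]
      rw [Finset.sum_filter]
      refine Finset.sum_congr rfl fun h _ => ?_
      by_cases hh : h ⊆ Liᶜ
      · simp only [← hLi]; simp [hh, Finset.sum_mul]
      · simp only [← hLi]; simp [hh]
    rw [h1, ← Finset.sum_product']
    refine Finset.sum_nbij' (fun p => p.1 ∪ p.2) (fun g => (g \ Li, g ∩ Li)) ?_ ?_ ?_ ?_ ?_
    · intro p _; exact Finset.mem_univ _
    · intro g _
      simp only [Finset.mem_product, Finset.mem_powerset]
      constructor
      · intro e he
        simp only [Finset.mem_sdiff] at he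
        simpa [Finset.mem_compl] using he.2
      · exact Finset.inter_subset_right
    · rintro ⟨h, h'⟩ hp
      simp only [Finset.mem_product, Finset.mem_powerset] at hp
      obtain ⟨hh, hh'⟩ := hp
      have e1 : (h ∪ h') \ Li = h := by
        ext e
        simp only [Finset.mem_sdiff, Finset.mem_union]
        constructor
        · rintro ⟨he | he, hne⟩
          · exact he
          · exact absurd (hh' he) hne
        · intro he
          exact ⟨Or.inl he, by simpa [Finset.mem_compl] using hh he⟩
      have e2 : (h ∪ h') ∩ Li = h' := by
        ext e
        simp only [Finset.mem_inter, Finset.mem_union]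
        constructor
        · rintro ⟨he | he, hmem⟩
          · exact absurd hmem (by simpa [Finset.mem_compl] using hh he)
          · exact he
        · intro he; exact ⟨Or.inr he, hh' he⟩
      simp [e1, e2]
    · intro g _
      simp [Finset.sdiff_union_inter]
    · rintro ⟨h, h'⟩ hp
      simp only [Finset.mem_product, Finset.mem_powerset] at hp
      obtain ⟨hh, hh'⟩ := hp
      have e1 : (h ∪ h') \ Li = h := by
        ext e
        simp only [Finset.mem_sdiff, Finset.mem_union]
        constructor
        · rintro ⟨he | he, hne⟩
          · exact he
          · exact absurd (hh' he) hne
        · intro he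
          exact ⟨Or.inl he, by simpa [Finset.mem_compl] using hh he⟩
      simp [e1]
  have step : ∀ g : Network N, ρ g * v (g \ Li)
      = ρ g * v g - (if i ∈ players g then ρ g * (v g - v (g \ Li)) else 0) := by
    intro g
    by_cases h : i ∈ players g
    · simp only [h, if_true]; ring
    · have hg : g \ Li = g := by
        ext e
        simp only [Finset.mem_sdiff, and_iff_left_iff_imp]
        intro he hmem
        apply h
        simp only [players, Finset.mem_filter, Finset.mem_univ, true_and]
        simp only [hLi, playerLinks, Finset.mem_filter, Finset.mem_univ, true_and] at hmem
        exact ⟨e, he, hmem⟩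
      simp [h, hg]
  rw [key]
  calc ∑ g : Network N, ρ g * v (g \ Li)
      = ∑ g : Network N, (ρ g * v g - (if i ∈ players g then ρ g * (v g - v (g \ Li)) else 0)) :=
        Finset.sum_congr rfl fun g _ => step g
    _ = (∑ g : Network N, ρ g * v g)
        - ∑ g : Network N, (if i ∈ players g then ρ g * (v g - v (g \ Li)) else 0) :=
        Finset.sum_sub_distrib _ _
    _ = expWealth v ρ - ∑ g ∈ Finset.univ.filter (fun g : Network N => i ∈ players g),
          ρ g * (v g - v (g \ Li)) := by
        rw [Finset.sum_filter]; rfl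
end
end

section
/- Let Y be a component balanced allocation rule on network games (for every component additive v, network g, and component h ∈ C(g): Σ_{i ∈ N(h)} Y_i(v,g) = v(h)). Then its standard extension Ψ^Y is component balanced on variable network games: for every component additive v, every ρ, and every component h ∈ C(g(ρ)) of the extent, Σ_{i ∈ N(h)} Ψ^Y_i(v,ρ) = Σ_g ρ(g)·v(g ∩ h). -/
open scoped Classical BigOperators

noncomputable section

variable {N : Type} [Fintype N] [DecidableEq N]

section Aux

lemma sym2_eq_of_mem {s : Sym2 N} {a b : N} (ha : a ∈ s) (hb : b ∈ s) (hab : a ≠ b) :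
    s = s(a, b) := by
  induction s using Sym2.inductionOn with
  | hf x y =>
    rw [Sym2.mem_iff] at ha hb
    rcases ha with rfl | rfl <;> rcases hb with rfl | rfl
    · exact absurd rfl hab
    · rfl
    · exact Sym2.eq_swap
    · exact absurd rfl hab

lemma mem_players' {g : Network N} {i : N} :
    i ∈ players g ↔ ∃ e ∈ g, i ∈ (e : Sym2 N) := by
  simp [players]

lemma players_mono' {g g' : Network N} (hgg : g ⊆ g') : players g ⊆ players g' := by
  intro i hi
  obtain ⟨e, he, hie⟩ := mem_players'.mp hi
  exact mem_players'.mpr ⟨e, hgg he, hie⟩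

lemma reach_of_link {g : Network N} {e : Link N} (he : e ∈ g) {a b : N}
    (ha : a ∈ (e : Sym2 N)) (hb : b ∈ (e : Sym2 N)) : (toGraph g).Reachable a b := by
  by_cases hab : a = b
  · subst hab; exact SimpleGraph.Reachable.refl a
  · exact SimpleGraph.Adj.reachable ⟨e, he, sym2_eq_of_mem ha hb hab⟩

lemma toGraph_mono_s10 {g g' : Network N} (hgg : g ⊆ g') : toGraph g ≤ toGraph g' := by
  rintro i j ⟨e, he, h2⟩
  exact ⟨e, hgg he, h2⟩

lemma sym2_exists_mem (s : Sym2 N) : ∃ a, a ∈ s := by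
  induction s using Sym2.inductionOn with
  | hf x y => exact ⟨x, Sym2.mem_mk_left x y⟩

lemma sameComp_refl_s10 {g : Network N} (e : Link N) : sameComp g e e := by
  obtain ⟨a, ha⟩ := sym2_exists_mem (e : Sym2 N)
  exact ⟨a, ha, a, ha, SimpleGraph.Reachable.refl a⟩

lemma sameComp_symm_s10 {g : Network N} {e f : Link N} (hs : sameComp g e f) : sameComp g f e := by
  obtain ⟨a, ha, b, hb, r⟩ := hs
  exact ⟨b, hb, a, ha, r.symm⟩

lemma sameComp_trans_s10 {g : Network N} {e f f' : Link N} (hf : f ∈ g)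
    (h1 : sameComp g e f) (h2 : sameComp g f f') : sameComp g e f' := by
  obtain ⟨a, ha, b, hb, r1⟩ := h1
  obtain ⟨c, hc, d, hd, r2⟩ := h2
  exact ⟨a, ha, d, hd, (r1.trans (reach_of_link hf hb hc)).trans r2⟩

lemma linkComponent_eq {g : Network N} {e f : Link N} (he : e ∈ g) (hf : f ∈ g)
    (hs : sameComp g e f) : linkComponent g e = linkComponent g f := by
  ext e'
  simp only [linkComponent, Finset.mem_filter]
  constructor
  · rintro ⟨h1, h2⟩
    exact ⟨h1, sameComp_trans_s10 he (sameComp_symm_s10 hs) h2⟩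
  · rintro ⟨h1, h2⟩
    exact ⟨h1, sameComp_trans_s10 hf hs h2⟩

lemma mem_linkComponent_self {g : Network N} {e : Link N} (he : e ∈ g) :
    e ∈ linkComponent g e :=
  Finset.mem_filter.mpr ⟨he, sameComp_refl_s10 e⟩

lemma linkComponent_subset {g : Network N} (e : Link N) : linkComponent g e ⊆ g :=
  Finset.filter_subset _ _

lemma comp_subset {k h : Network N} (hh : h ∈ components k) : h ⊆ k := by
  obtain ⟨e, _, rfl⟩ := Finset.mem_image.mp hh
  exact linkComponent_subset e

/-- A link of `K` touching a player of a component `h` of `K` lies in `h`. -/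
lemma mem_comp_of_player {K h : Network N} (hh : h ∈ components K)
    {e : Link N} (heK : e ∈ K) {x : N} (hx : x ∈ (e : Sym2 N)) (hxh : x ∈ players h) :
    e ∈ h := by
  obtain ⟨e₀, he₀, rfl⟩ := Finset.mem_image.mp hh
  obtain ⟨f, hf, hxf⟩ := mem_players'.mp hxh
  have hfk : f ∈ K ∧ sameComp K e₀ f := Finset.mem_filter.mp hf
  obtain ⟨a, ha, b, hb, r⟩ := hfk.2
  exact Finset.mem_filter.mpr ⟨heK, ⟨a, ha, x, hx, r.trans (reach_of_link hfk.1 hb hxf)⟩⟩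

lemma comp_disjoint {k h1 h2 : Network N} (h1m : h1 ∈ components k) (h2m : h2 ∈ components k)
    (hne : h1 ≠ h2) : Disjoint (players h1) (players h2) := by
  rw [Finset.disjoint_left]
  intro i hi1 hi2
  obtain ⟨e1, he1, rfl⟩ := Finset.mem_image.mp h1m
  obtain ⟨e2, he2, rfl⟩ := Finset.mem_image.mp h2m
  obtain ⟨f1, hf1, hif1⟩ := mem_players'.mp hi1
  obtain ⟨f2, hf2, hif2⟩ := mem_players'.mp hi2
  have hf1' : f1 ∈ k ∧ sameComp k e1 f1 := Finset.mem_filter.mp hf1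
  have hf2' : f2 ∈ k ∧ sameComp k e2 f2 := Finset.mem_filter.mp hf2
  have h12 : sameComp k f1 f2 := ⟨i, hif1, i, hif2, SimpleGraph.Reachable.refl i⟩
  have hee : sameComp k e1 e2 :=
    sameComp_trans_s10 hf2'.1 (sameComp_trans_s10 hf1'.1 hf1'.2 h12) (sameComp_symm_s10 hf2'.2)
  exact hne (linkComponent_eq he1 he2 hee)

lemma players_biUnion (k : Network N) : players k = (components k).biUnion players := by
  ext i
  simp only [Finset.mem_biUnion]
  constructor
  · intro hi
    obtain ⟨e, he, hie⟩ := mem_players'.mp hi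
    exact ⟨linkComponent k e, Finset.mem_image_of_mem _ he,
      mem_players'.mpr ⟨e, mem_linkComponent_self he, hie⟩⟩
  · rintro ⟨h', hh', hih'⟩
    exact players_mono' (comp_subset hh') hih'

/-- Walks in `g ⊆ K` starting at a player of a component `h` of `K` stay in `g ∩ h`. -/
lemma walk_inter {K g h : Network N} (hgK : g ⊆ K) (hh : h ∈ components K) :
    ∀ {a b : N}, (toGraph g).Walk a b → a ∈ players h →
      (toGraph (g ∩ h)).Reachable a b ∧ b ∈ players h := by
  intro a b w
  induction w with
  | nil => exact fun ha => ⟨SimpleGraph.Reachable.refl _, ha⟩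
  | @cons x y z hadj p ih =>
    intro ha
    obtain ⟨e, heg, hes⟩ := hadj
    have hx : x ∈ (e : Sym2 N) := by rw [hes]; exact Sym2.mem_mk_left x y
    have hy : y ∈ (e : Sym2 N) := by rw [hes]; exact Sym2.mem_mk_right x y
    have heh : e ∈ h := mem_comp_of_player hh (hgK heg) hx ha
    have hyh : y ∈ players h := mem_players'.mpr ⟨e, heh, hy⟩
    obtain ⟨r, hb⟩ := ih hyh
    have hadj' : (toGraph (g ∩ h)).Adj x y := ⟨e, Finset.mem_inter.mpr ⟨heg, heh⟩, hes⟩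
    exact ⟨hadj'.reachable.trans r, hb⟩

/-- Components of `g ∩ h` are components of `g`. -/
lemma components_inter_subset {K g h : Network N} (hgK : g ⊆ K)
    (hh : h ∈ components K) : components (g ∩ h) ⊆ components g := by
  intro h' hh'
  obtain ⟨f, hf, rfl⟩ := Finset.mem_image.mp hh'
  have hfg : f ∈ g := (Finset.mem_inter.mp hf).1
  have hfh : f ∈ h := (Finset.mem_inter.mp hf).2
  have hkey : linkComponent (g ∩ h) f = linkComponent g f := by
    ext f'
    simp only [linkComponent, Finset.mem_filter]
    constructor
    · rintro ⟨h1, ⟨a, ha, b, hb, r⟩⟩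
      exact ⟨(Finset.mem_inter.mp h1).1,
        ⟨a, ha, b, hb, r.mono (toGraph_mono_s10 Finset.inter_subset_left)⟩⟩
    · rintro ⟨h1, ⟨a, ha, b, hb, r⟩⟩
      have hah : a ∈ players h := mem_players'.mpr ⟨f, hfh, ha⟩
      obtain ⟨r', hbh⟩ := walk_inter hgK hh r.some hah
      have hf'h : f' ∈ h := mem_comp_of_player hh (hgK h1) hb hbh
      exact ⟨Finset.mem_inter.mpr ⟨h1, hf'h⟩, ⟨a, ha, b, hb, r'⟩⟩
  rw [hkey]
  exact Finset.mem_image_of_mem _ hfg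

/-- The key per-network identity. -/
lemma key_sum (Y : (Network N → ℝ) → Network N → N → ℝ)
    (hY : ∀ v : Network N → ℝ, CompAdditive v → ∀ g : Network N,
      ∀ h ∈ components g, ∑ i ∈ players h, Y v g i = v h)
    (hY0 : ∀ (v : Network N → ℝ) (g : Network N) (i : N), i ∉ players g → Y v g i = 0)
    (v : Network N → ℝ) (hv : CompAdditive v) {K g h : Network N}
    (hgK : g ⊆ K) (hh : h ∈ components K) :
    ∑ i ∈ players h, Y v g i = v (g ∩ h) := by
  have h1 : ∑ i ∈ players h, Y v g i = ∑ i ∈ players (g ∩ h), Y v g i := by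
    symm
    apply Finset.sum_subset (players_mono' Finset.inter_subset_right)
    intro i hih hin
    apply hY0
    intro hig
    obtain ⟨e, heg, hie⟩ := mem_players'.mp hig
    have heh : e ∈ h := mem_comp_of_player hh (hgK heg) hie hih
    exact hin (mem_players'.mpr ⟨e, Finset.mem_inter.mpr ⟨heg, heh⟩, hie⟩)
  have hdisj : Set.PairwiseDisjoint (↑(components (g ∩ h)) : Set (Network N)) players := by
    intro h1m hm1 h2m hm2 hne
    exact comp_disjoint hm1 hm2 hne
  rw [h1, players_biUnion (g ∩ h), Finset.sum_biUnion hdisj, hv (g ∩ h)]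
  exact Finset.sum_congr rfl fun h' hh' =>
    hY v hv g h' (components_inter_subset hgK hh hh')

end Aux

/-- the standard extension of a component balanced allocation rule is
component balanced. -/
theorem standardExtension_componentBalanced (Y : (Network N → ℝ) → Network N → N → ℝ)
    (hY : ∀ v : Network N → ℝ, CompAdditive v → ∀ g : Network N,
      ∀ h ∈ components g, ∑ i ∈ players h, Y v g i = v h)
    (hY0 : ∀ (v : Network N → ℝ) (g : Network N) (i : N), i ∉ players g → Y v g i = 0)
    (v ρ : Network N → ℝ) (hv : CompAdditive v) (hρ : IsDist ρ)
    (h : Network N) (hh : h ∈ components (extent ρ)) :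
    ∑ i ∈ players h, (∑ g : Network N, ρ g * Y v g i) =
      ∑ g : Network N, ρ g * v (g ∩ h) := by
  rw [Finset.sum_comm]
  apply Finset.sum_congr rfl
  intro g _
  by_cases h0 : ρ g = 0
  · simp [h0]
  · have hpos : 0 < ρ g := lt_of_le_of_ne (hρ.1 g) (Ne.symm h0)
    have hgK : g ⊆ extent ρ := by
      intro e he
      exact Finset.mem_filter.mpr ⟨Finset.mem_univ e, ⟨g, hpos, he⟩⟩
    rw [← Finset.mul_sum, key_sum Y hY hY0 v hv hgK hh]
end
end

section
/- The Expected Myerson Value Ψ^m satisfies the equal bargaining power property: for every variable network game (v,ρ) and every link ij in the extent g(ρ), Ψ^m_i(v,ρ) − Ψ^m_i(v,ρ^{-ij}) = Ψ^m_j(v,ρ) − Ψ^m_j(v,ρ^{-ij}). -/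
open scoped Classical BigOperators

noncomputable section

variable {N : Type} [Fintype N] [DecidableEq N]

private lemma sum_networks_split (e : Link N) (f : Network N → ℝ) :
    ∑ g : Network N, f g =
      ∑ g ∈ ((Finset.univ : Finset (Link N)).erase e).powerset,
        (f g + f (insert e g)) := by
  rw [← Finset.powerset_univ]
  conv_lhs => rw [← Finset.insert_erase (Finset.mem_univ e)]
  rw [Finset.sum_powerset_insert (Finset.notMem_erase e _), Finset.sum_add_distrib]

private lemma linkRemove_apply (ρ : Network N → ℝ) (e : Link N) (g : Network N)
    (he : e ∉ g) : linkRemove ρ e g = ρ g + ρ (insert e g) := by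
  unfold linkRemove restrictDist
  have hsub : g ⊆ ({e} : Network N)ᶜ := by
    intro x hx
    simp only [Finset.mem_compl, Finset.mem_singleton]
    exact fun h => he (h ▸ hx)
  rw [if_pos hsub, compl_compl,
    show ({e} : Network N) = insert e ∅ from rfl,
    Finset.sum_powerset_insert (Finset.notMem_empty e), Finset.powerset_empty,
    Finset.sum_singleton, Finset.sum_singleton]
  rw [Finset.union_empty, Finset.union_comm, Finset.insert_union, Finset.empty_union]

private lemma linkRemove_apply_mem (ρ : Network N → ℝ) (e : Link N) (g : Network N)
    (he : e ∈ g) : linkRemove ρ e g = 0 := by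
  unfold linkRemove restrictDist
  rw [if_neg]
  intro h
  have := h he
  simp at this

private lemma coopGame_linkRemove_eq (v ρ : Network N → ℝ) (i j : N) (hij : i ≠ j)
    (S : Finset N) (hS : ¬(i ∈ S ∧ j ∈ S)) :
    coopGame v (linkRemove ρ (mkLink i j hij)) S = coopGame v ρ S := by
  set e := mkLink i j hij with hedef
  unfold coopGame
  rw [sum_networks_split e, sum_networks_split e (fun g => ρ g * v (netRestrict g S))]
  refine Finset.sum_congr rfl fun g hg => ?_
  have heg : e ∉ g := fun h =>
    Finset.notMem_erase e _ (Finset.mem_powerset.mp hg h)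
  have hres : netRestrict (insert e g) S = netRestrict g S := by
    unfold netRestrict
    rw [Finset.filter_insert, if_neg]
    intro hall
    have hi : i ∈ S := hall i (by rw [hedef]; simp [mkLink])
    have hj : j ∈ S := hall j (by rw [hedef]; simp [mkLink])
    exact hS ⟨hi, hj⟩
  rw [linkRemove_apply ρ e g heg, linkRemove_apply_mem ρ e _ (Finset.mem_insert_self e g),
    hres]
  ring

private lemma expectedMyerson_eq_shapley (v ρ : Network N → ℝ) (i : N) :
    expectedMyerson v ρ i = shapley (coopGame v ρ) i := by
  unfold expectedMyerson myerson shapley coopGame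
  simp only [Finset.mul_sum]
  rw [Finset.sum_comm]
  refine Finset.sum_congr rfl fun S _ => ?_
  rw [mul_sub, Finset.mul_sum, Finset.mul_sum, ← Finset.sum_sub_distrib]
  refine Finset.sum_congr rfl fun g _ => ?_
  ring

private lemma shapley_sub (ω ω' : Finset N → ℝ) (i : N) :
    shapley ω i - shapley ω' i = shapley (fun S => ω S - ω' S) i := by
  unfold shapley
  rw [← Finset.sum_sub_distrib]
  exact Finset.sum_congr rfl fun S _ => by ring

private lemma shapley_symm (D : Finset N → ℝ) (i j : N) (hij : i ≠ j)
    (h0 : ∀ S : Finset N, ¬(i ∈ S ∧ j ∈ S) → D S = 0) :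
    shapley D i = shapley D j := by
  have h0' : ∀ S : Finset N, ¬(j ∈ S ∧ i ∈ S) → D S = 0 := fun S h =>
    h0 S (fun ⟨h1, h2⟩ => h ⟨h2, h1⟩)
  have step : ∀ a b : N, a ≠ b → (∀ S : Finset N, ¬(a ∈ S ∧ b ∈ S) → D S = 0) →
      shapley D a = ∑ S ∈ (Finset.univ.erase a).powerset.filter (fun S => b ∈ S),
        ((S.card.factorial * (Fintype.card N - S.card - 1).factorial : ℝ) /
          (Fintype.card N).factorial) * D (insert a S) := by
    intro a b hab hz
    unfold shapley
    rw [← Finset.sum_filter_add_sum_filter_not _ (fun S => b ∈ S)]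
    have hzero : ∀ S ∈ (Finset.univ.erase a).powerset.filter (fun S => ¬ b ∈ S),
        ((S.card.factorial * (Fintype.card N - S.card - 1).factorial : ℝ) /
          (Fintype.card N).factorial) * (D (insert a S) - D S) = 0 := by
      intro S hSm
      obtain ⟨hS1, hS2⟩ := Finset.mem_filter.mp hSm
      have haS : a ∉ S := fun h =>
        Finset.notMem_erase a _ (Finset.mem_powerset.mp hS1 h)
      have hDS : D S = 0 := hz S (fun ⟨h1, _⟩ => haS h1)
      have hDiS : D (insert a S) = 0 := hz _ (fun ⟨_, h2⟩ => by
        rcases Finset.mem_insert.mp h2 with h | h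
        · exact hab h.symm
        · exact hS2 h)
      rw [hDS, hDiS]; ring
    rw [Finset.sum_eq_zero hzero, add_zero]
    refine Finset.sum_congr rfl fun S hSm => ?_
    obtain ⟨hS1, _⟩ := Finset.mem_filter.mp hSm
    have haS : a ∉ S := fun h =>
      Finset.notMem_erase a _ (Finset.mem_powerset.mp hS1 h)
    rw [hz S (fun ⟨h1, _⟩ => haS h1), sub_zero]
  rw [step i j hij h0, step j i hij.symm h0']
  refine Finset.sum_nbij' (fun S => insert i (S.erase j)) (fun T => insert j (T.erase i))
    ?_ ?_ ?_ ?_ ?_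
  · intro S hS
    obtain ⟨hS1, hS2⟩ := Finset.mem_filter.mp hS
    have hiS : i ∉ S := fun h =>
      Finset.notMem_erase i _ (Finset.mem_powerset.mp hS1 h)
    refine Finset.mem_filter.mpr ⟨Finset.mem_powerset.mpr ?_, Finset.mem_insert_self _ _⟩
    intro x hx
    rcases Finset.mem_insert.mp hx with rfl | hx
    · exact Finset.mem_erase.mpr ⟨hij, Finset.mem_univ x⟩
    · exact Finset.mem_erase.mpr ⟨(Finset.mem_erase.mp hx).1, Finset.mem_univ x⟩
  · intro T hT
    obtain ⟨hT1, hT2⟩ := Finset.mem_filter.mp hT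
    have hjT : j ∉ T := fun h =>
      Finset.notMem_erase j _ (Finset.mem_powerset.mp hT1 h)
    refine Finset.mem_filter.mpr ⟨Finset.mem_powerset.mpr ?_, Finset.mem_insert_self _ _⟩
    intro x hx
    rcases Finset.mem_insert.mp hx with rfl | hx
    · exact Finset.mem_erase.mpr ⟨hij.symm, Finset.mem_univ x⟩
    · exact Finset.mem_erase.mpr ⟨(Finset.mem_erase.mp hx).1, Finset.mem_univ x⟩
  · intro S hS
    obtain ⟨hS1, hS2⟩ := Finset.mem_filter.mp hS
    have hiS : i ∉ S := fun h =>
      Finset.notMem_erase i _ (Finset.mem_powerset.mp hS1 h)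
    have : i ∉ S.erase j := fun h => hiS (Finset.mem_of_mem_erase h)
    show insert j ((insert i (S.erase j)).erase i) = S
    rw [Finset.erase_insert this, Finset.insert_erase hS2]
  · intro T hT
    obtain ⟨hT1, hT2⟩ := Finset.mem_filter.mp hT
    have hjT : j ∉ T := fun h =>
      Finset.notMem_erase j _ (Finset.mem_powerset.mp hT1 h)
    have : j ∉ T.erase i := fun h => hjT (Finset.mem_of_mem_erase h)
    show insert i ((insert j (T.erase i)).erase j) = T
    rw [Finset.erase_insert this, Finset.insert_erase hT2]
  · intro S hS
    obtain ⟨hS1, hS2⟩ := Finset.mem_filter.mp hS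
    have hiS : i ∉ S := fun h =>
      Finset.notMem_erase i _ (Finset.mem_powerset.mp hS1 h)
    have hiej : i ∉ S.erase j := fun h => hiS (Finset.mem_of_mem_erase h)
    have hcard : (insert i (S.erase j)).card = S.card := by
      rw [Finset.card_insert_of_notMem hiej, Finset.card_erase_of_mem hS2]
      have : 0 < S.card := Finset.card_pos.mpr ⟨j, hS2⟩
      omega
    show _ = ((insert i (S.erase j)).card.factorial *
        (Fintype.card N - (insert i (S.erase j)).card - 1).factorial : ℝ) /
        (Fintype.card N).factorial * D (insert j (insert i (S.erase j)))
    rw [hcard, Finset.insert_comm, Finset.insert_erase hS2]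

/-- the Expected Myerson Value satisfies the equal bargaining power
property. -/
theorem expectedMyerson_equalBargainingPower (v ρ : Network N → ℝ) (hv : v ∅ = 0)
    (hρ : IsDist ρ) (i j : N) (hij : i ≠ j) (he : mkLink i j hij ∈ extent ρ) :
    expectedMyerson v ρ i - expectedMyerson v (linkRemove ρ (mkLink i j hij)) i =
      expectedMyerson v ρ j - expectedMyerson v (linkRemove ρ (mkLink i j hij)) j := by
  rw [expectedMyerson_eq_shapley v ρ i,
    expectedMyerson_eq_shapley v (linkRemove ρ (mkLink i j hij)) i, shapley_sub,
    expectedMyerson_eq_shapley v ρ j,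
    expectedMyerson_eq_shapley v (linkRemove ρ (mkLink i j hij)) j, shapley_sub]
  exact shapley_symm _ i j hij fun S hS => by
    rw [coopGame_linkRemove_eq v ρ i j hij S hS, sub_self]
end
end

section
/- Suppose Y^m satisfies the balanced contributions property on network games: Y^m_i(v,g) − Y^m_i(v, g \ L_j) = Y^m_j(v,g) − Y^m_j(v, g \ L_i) for all g and i ≠ j. Then the Expected Myerson Value satisfies the balanced contributions property on variable network games: Ψ^m_i(v,ρ) − Ψ^m_i(v,ρ^{-j}) = Ψ^m_j(v,ρ) − Ψ^m_j(v,ρ^{-i}) for all (v,ρ) and i ≠ j, where Ψ^m(v,ρ) = Σ_g ρ(g)·Y^m(v,g). Key identity: Ψ^m_i(v,ρ) − Ψ^m_i(v,ρ^{-j}) = Σ_{g ⊆ g(ρ)} ρ(g)·(Y^m_i(v,g) − Y^m_i(v, g \ L_j(g))). -/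
open scoped Classical BigOperators

noncomputable section

variable {N : Type} [Fintype N] [DecidableEq N]

lemma restrictDist_sum_key (ρ : Network N → ℝ) (L : Network N) (f : Network N → ℝ) :
    ∑ g : Network N, restrictDist ρ Lᶜ g * f g = ∑ g : Network N, ρ g * f (g \ L) := by
  have h1 : ∀ g : Network N, restrictDist ρ Lᶜ g * f g =
      if g ⊆ Lᶜ then ∑ h' ∈ L.powerset, ρ (g ∪ h') * f g else 0 := by
    intro g
    simp only [restrictDist, compl_compl]
    split
    · rw [Finset.sum_mul]
    · ring
  rw [Finset.sum_congr rfl (fun g _ => h1 g)]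
  rw [Finset.sum_ite, Finset.sum_const_zero, add_zero]
  have h2 : Finset.univ.filter (fun g : Network N => g ⊆ Lᶜ) = Lᶜ.powerset := by
    ext g; simp [Finset.mem_powerset]
  rw [h2, ← Finset.sum_product']
  refine Finset.sum_nbij' (fun p => p.1 ∪ p.2) (fun g => (g \ L, g ∩ L)) ?_ ?_ ?_ ?_ ?_
  · intro p _; exact Finset.mem_univ _
  · intro g _
    simp only [Finset.mem_product, Finset.mem_powerset]
    constructor
    · intro e he; simp only [Finset.mem_compl]
      exact (Finset.mem_sdiff.mp he).2
    · exact Finset.inter_subset_right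
  · rintro ⟨a, b⟩ hp
    simp only [Finset.mem_product, Finset.mem_powerset] at hp
    obtain ⟨ha, hb⟩ := hp
    have haL : a ∩ L = ∅ := by
      rw [Finset.eq_empty_iff_forall_notMem]
      intro e he
      have := ha (Finset.mem_inter.mp he).1
      exact (Finset.mem_compl.mp this) (Finset.mem_inter.mp he).2
    have : (a ∪ b) \ L = a := by
      rw [Finset.union_sdiff_distrib]
      rw [Finset.sdiff_eq_self_iff_disjoint.mpr (Finset.disjoint_iff_inter_eq_empty.mpr haL)]
      rw [Finset.sdiff_eq_empty_iff_subset.mpr hb, Finset.union_empty]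
    have h2 : (a ∪ b) ∩ L = b := by
      rw [Finset.union_inter_distrib_right, haL, Finset.empty_union,
        Finset.inter_eq_left.mpr hb]
    simp [this, h2]
  · intro g _
    simp [Finset.sdiff_union_inter]
  · rintro ⟨a, b⟩ hp
    simp only [Finset.mem_product, Finset.mem_powerset] at hp
    obtain ⟨ha, hb⟩ := hp
    have haL : Disjoint a L := by
      rw [Finset.disjoint_left]; intro e he heL
      exact (Finset.mem_compl.mp (ha he)) heL
    have : (a ∪ b) \ L = a := by
      rw [Finset.union_sdiff_distrib, Finset.sdiff_eq_self_iff_disjoint.mpr haL,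
        Finset.sdiff_eq_empty_iff_subset.mpr hb, Finset.union_empty]
    simp [this]

/-- if Y^m satisfies the balanced contributions property on network
games, then its standard extension satisfies the balanced contributions property on
variable network games. -/
theorem standardExtension_balancedContributions
    (Ym : (Network N → ℝ) → Network N → N → ℝ)
    (hYm : ∀ (v : Network N → ℝ) (g : Network N) (i j : N), i ≠ j →
      Ym v g i - Ym v (g \ playerLinks j Finset.univ) i =
        Ym v g j - Ym v (g \ playerLinks i Finset.univ) j)
    (v ρ : Network N → ℝ) (hv : v ∅ = 0) (hρ : IsDist ρ) (i j : N) (hij : i ≠ j) :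
    (∑ g : Network N, ρ g * Ym v g i) - (∑ g : Network N, playerRemove ρ j g * Ym v g i) =
      (∑ g : Network N, ρ g * Ym v g j) -
        (∑ g : Network N, playerRemove ρ i g * Ym v g j) := by
  unfold playerRemove
  rw [restrictDist_sum_key ρ (playerLinks j Finset.univ) (fun g => Ym v g i),
    restrictDist_sum_key ρ (playerLinks i Finset.univ) (fun g => Ym v g j),
    ← Finset.sum_sub_distrib, ← Finset.sum_sub_distrib]
  refine Finset.sum_congr rfl fun g _ => ?_
  rw [← mul_sub, ← mul_sub, hYm v g i j hij]
end
end

section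
/- Suppose the Position Value Y^p satisfies the balanced link contributions property on network games. Then the Expected Position Value Ψ^p(v,ρ) = Σ_g ρ(g)·Y^p(v,g) satisfies the balanced link contributions property on variable network games: for all i ≠ j, Σ_{jk ∈ L_j(g(ρ))} [Ψ^p_i(v,ρ) − Ψ^p_i(v,ρ^{-jk})] = Σ_{ik ∈ L_i(g(ρ))} [Ψ^p_j(v,ρ) − Ψ^p_j(v,ρ^{-ik})]. Key identity: Σ_{jk ∈ L_j(g(ρ))} [Ψ^p_i(v,ρ) − Ψ^p_i(v,ρ^{-jk})] = Σ_{g ⊆ g(ρ)} ρ(g)·Σ_{jk ∈ L_j(g)} (Y^p_i(v,g) − Y^p_i(v, g − jk)). -/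
open scoped Classical BigOperators

noncomputable section

variable {N : Type} [Fintype N] [DecidableEq N]

lemma linkRemove_eq (ρ : Network N → ℝ) (e : Link N) (g : Network N) :
    linkRemove ρ e g = if e ∉ g then ρ g + ρ (insert e g) else 0 := by
  have hc : ({e}ᶜ : Network N)ᶜ = {e} := by simp
  simp only [linkRemove, restrictDist, hc]
  have hps : ({e} : Network N).powerset = {∅, {e}} := by
    ext t; simp [Finset.subset_singleton_iff]
  have hsub : g ⊆ {e}ᶜ ↔ e ∉ g := by
    simp [Finset.subset_iff, Finset.eq_singleton_iff_unique_mem]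
  by_cases h : e ∈ g
  · simp [hsub, h]
  · rw [if_pos (hsub.mpr h), if_pos h, hps]
    rw [Finset.sum_insert (by simp [Ne.symm (Finset.singleton_ne_empty e)]), Finset.sum_singleton]
    simp

lemma sum_linkRemove (ρ : Network N → ℝ) (e : Link N) (f : Network N → ℝ) :
    ∑ g : Network N, linkRemove ρ e g * f g = ∑ g : Network N, ρ g * f (g.erase e) := by
  rw [← Finset.sum_filter_add_sum_filter_not Finset.univ (fun g => e ∈ g)
    (fun g => linkRemove ρ e g * f g),
    ← Finset.sum_filter_add_sum_filter_not Finset.univ (fun g => e ∈ g)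
    (fun g => ρ g * f (g.erase e))]
  have h1 : ∑ g ∈ Finset.univ.filter (fun g => e ∈ g), linkRemove ρ e g * f g = 0 := by
    apply Finset.sum_eq_zero
    intro g hg
    simp only [Finset.mem_filter] at hg
    rw [linkRemove_eq]
    simp [hg.2]
  rw [h1, zero_add]
  have h2 : ∑ g ∈ Finset.univ.filter (fun g => e ∈ g), ρ g * f (g.erase e) =
      ∑ g ∈ Finset.univ.filter (fun g => e ∉ g), ρ (insert e g) * f g := by
    apply Finset.sum_nbij' (fun g => g.erase e) (fun g => insert e g)
    · intro g hg; simp only [Finset.mem_filter] at *; simp [hg.2]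
    · intro g hg; simp only [Finset.mem_filter] at *; simp [hg.2]
    · intro g hg; simp only [Finset.mem_filter] at hg; exact Finset.insert_erase hg.2
    · intro g hg; simp only [Finset.mem_filter] at hg; exact Finset.erase_insert hg.2
    · intro g hg; simp only [Finset.mem_filter] at hg
      rw [Finset.insert_erase hg.2]
  rw [h2, ← Finset.sum_add_distrib]
  apply Finset.sum_congr rfl
  intro g hg
  simp only [Finset.mem_filter] at hg
  rw [linkRemove_eq, Finset.erase_eq_of_notMem hg.2]
  simp [hg.2]; ring

lemma subset_extent_s17 (ρ : Network N → ℝ) (hρ : ∀ g, 0 ≤ ρ g) (g : Network N)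
    (hg : ρ g ≠ 0) : g ⊆ extent ρ := by
  intro e he
  simp only [extent, Finset.mem_filter, Finset.mem_univ, true_and]
  exact ⟨g, lt_of_le_of_ne (hρ g) (Ne.symm hg), he⟩

lemma side (Yp : (Network N → ℝ) → Network N → N → ℝ) (v ρ : Network N → ℝ)
    (hρ : ∀ g, 0 ≤ ρ g) (a b : N) :
    ∑ e ∈ playerLinks b (extent ρ),
      ((∑ g : Network N, ρ g * Yp v g a) - ∑ g : Network N, linkRemove ρ e g * Yp v g a) =
    ∑ g : Network N, ρ g * ∑ e ∈ playerLinks b g, (Yp v g a - Yp v (g.erase e) a) := by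
  have : ∀ e ∈ playerLinks b (extent ρ),
      ((∑ g : Network N, ρ g * Yp v g a) - ∑ g : Network N, linkRemove ρ e g * Yp v g a)
      = ∑ g : Network N, ρ g * (Yp v g a - Yp v (g.erase e) a) := by
    intro e _
    rw [sum_linkRemove, ← Finset.sum_sub_distrib]
    exact Finset.sum_congr rfl fun g _ => by ring
  rw [Finset.sum_congr rfl this, Finset.sum_comm]
  apply Finset.sum_congr rfl
  intro g _
  rw [Finset.mul_sum]
  by_cases hg : ρ g = 0
  · simp [hg]
  · symm
    apply Finset.sum_subset
    · intro e he
      simp only [playerLinks, Finset.mem_filter] at he ⊢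
      exact ⟨subset_extent_s17 ρ hρ g hg he.1, he.2⟩
    · intro e het hes
      simp only [playerLinks, Finset.mem_filter] at het hes
      have heg : e ∉ g := fun h => hes ⟨h, het.2⟩
      rw [Finset.erase_eq_of_notMem heg]
      simp

/-- if the Position Value satisfies the balanced link contributions
property on network games, then the Expected Position Value satisfies the balanced
link contributions property on variable network games. -/
theorem standardExtension_balancedLinkContributions
    (Yp : (Network N → ℝ) → Network N → N → ℝ)
    (hYp : ∀ (v : Network N → ℝ) (g : Network N) (i j : N), i ≠ j →
      ∑ e ∈ playerLinks j g, (Yp v g i - Yp v (g.erase e) i) =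
        ∑ e ∈ playerLinks i g, (Yp v g j - Yp v (g.erase e) j))
    (v ρ : Network N → ℝ) (hv : v ∅ = 0) (hρ : IsDist ρ) (i j : N) (hij : i ≠ j) :
    ∑ e ∈ playerLinks j (extent ρ),
        ((∑ g : Network N, ρ g * Yp v g i) - ∑ g : Network N, linkRemove ρ e g * Yp v g i) =
      ∑ e ∈ playerLinks i (extent ρ),
        ((∑ g : Network N, ρ g * Yp v g j) -
          ∑ g : Network N, linkRemove ρ e g * Yp v g j) := by
  rw [side Yp v ρ hρ.1 i j, side Yp v ρ hρ.1 j i]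
  exact Finset.sum_congr rfl fun g _ => by rw [hYp v g i j hij]
end
end
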